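/- For r ≥ 3, the graph obtained from the complete bipartite graph K_{r,r} by deleting a perfect matching and then adding back one matching edge has monophonic position number 2; consequently mex(2r;2) ≥ r² − r + 1. -/

import Mathlib

open SimpleGraph

/-- A walk is an *induced (monophonic) path* if it is a path and vertices on the
walk are adjacent in `G` exactly when they are consecutive on the walk. -/
def IsInducedPathW {V : Type*} (G : SimpleGraph V) {u v : V} (p : G.Walk u v) : Prop :=
  p.IsPath ∧ ∀ a b : V, a ∈ p.support → b ∈ p.support → (G.Adj a b ↔ p.toSubgraph.Adj a b)

/-- A walk is a *geodesic* if it is a shortest path between its endpoints. -/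
def IsGeodesicW {V : Type*} (G : SimpleGraph V) {u v : V} (p : G.Walk u v) : Prop :=
  p.IsPath ∧ p.length = G.dist u v

/-- A set of vertices is in *monophonic position* if no induced path of `G`
contains more than two of its vertices. -/
def IsMpSet {V : Type*} (G : SimpleGraph V) (S : Set V) : Prop :=
  ∀ ⦃u v : V⦄ (p : G.Walk u v), IsInducedPathW G p → (S ∩ {x | x ∈ p.support}).ncard ≤ 2

/-- A set of vertices is in *general position* if no geodesic of `G` contains
more than two of its vertices. -/
def IsGpSet {V : Type*} (G : SimpleGraph V) (S : Set V) : Prop :=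
  ∀ ⦃u v : V⦄ (p : G.Walk u v), IsGeodesicW G p → (S ∩ {x | x ∈ p.support}).ncard ≤ 2

/-- The monophonic position number `mp(G)`. -/
noncomputable def mpNum {V : Type*} (G : SimpleGraph V) : ℕ :=
  sSup {n | ∃ S : Set V, IsMpSet G S ∧ S.ncard = n}

/-- The general position number `gp(G)`. -/
noncomputable def gpNum {V : Type*} (G : SimpleGraph V) : ℕ :=
  sSup {n | ∃ S : Set V, IsGpSet G S ∧ S.ncard = n}

/-- `mex n a`: the largest number of edges of a graph of order `n` with
monophonic position number `a`. -/
noncomputable def mexNum (n a : ℕ) : ℕ :=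
  sSup {m | ∃ G : SimpleGraph (Fin n), mpNum G = a ∧ G.edgeSet.ncard = m}

/-- The complete bipartite graph `K_{r,r}` minus a perfect matching, with one
matching edge added back. -/
def nearMatchingFreeGraph (r : ℕ) : SimpleGraph (Fin r ⊕ Fin r) :=
  SimpleGraph.fromRel fun u v =>
    match u, v with
    | .inl i, .inr j => i ≠ j ∨ ((i : ℕ) = 0 ∧ (j : ℕ) = 0)
    | _, _ => False

section Aux

lemma ind3 {V : Type*} {G : SimpleGraph V} {v0 v1 v2 : V}
    (h01 : G.Adj v0 v1) (h12 : G.Adj v1 v2) (h02 : v0 ≠ v2) (n02 : ¬ G.Adj v0 v2) :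
    ∃ p : G.Walk v0 v2, IsInducedPathW G p ∧ p.support = [v0, v1, v2] := by
  refine ⟨Walk.cons h01 (Walk.cons h12 Walk.nil), ⟨?_, ?_⟩, by simp⟩
  · simp [Walk.isPath_def, h01.ne, h12.ne, h02]
  · intro a b ha hb
    constructor
    · intro hab
      simp only [Walk.support_cons, Walk.support_nil, List.mem_cons, List.mem_singleton,
        List.not_mem_nil, or_false] at ha hb
      simp only [Walk.toSubgraph, Subgraph.sup_adj, subgraphOfAdj_adj, singletonSubgraph_adj,
        Pi.bot_apply, Sym2.eq, Sym2.rel_iff', Prod.mk.injEq, Prod.swap_prod_mk]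
      rcases ha with rfl | rfl | rfl <;> rcases hb with rfl | rfl | rfl <;>
        first
        | exact absurd hab (G.irrefl)
        | tauto
    · intro h
      exact (Walk.cons h01 (Walk.cons h12 Walk.nil)).toSubgraph.adj_sub h

lemma ind4 {V : Type*} {G : SimpleGraph V} {v0 v1 v2 v3 : V}
    (h01 : G.Adj v0 v1) (h12 : G.Adj v1 v2) (h23 : G.Adj v2 v3)
    (e02 : v0 ≠ v2) (e03 : v0 ≠ v3) (e13 : v1 ≠ v3)
    (n02 : ¬ G.Adj v0 v2) (n03 : ¬ G.Adj v0 v3) (n13 : ¬ G.Adj v1 v3) :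
    ∃ p : G.Walk v0 v3, IsInducedPathW G p ∧ p.support = [v0, v1, v2, v3] := by
  refine ⟨Walk.cons h01 (Walk.cons h12 (Walk.cons h23 Walk.nil)), ⟨?_, ?_⟩, by simp⟩
  · simp [Walk.isPath_def, h01.ne, h12.ne, h23.ne, e02, e03, e13]
  · intro a b ha hb
    constructor
    · intro hab
      simp only [Walk.support_cons, Walk.support_nil, List.mem_cons, List.mem_singleton,
        List.not_mem_nil, or_false] at ha hb
      simp only [Walk.toSubgraph, Subgraph.sup_adj, subgraphOfAdj_adj, singletonSubgraph_adj,
        Pi.bot_apply, Sym2.eq, Sym2.rel_iff', Prod.mk.injEq, Prod.swap_prod_mk]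
      have n20 := fun h => n02 (G.adj_symm h)
      have n30 := fun h => n03 (G.adj_symm h)
      have n31 := fun h => n13 (G.adj_symm h)
      rcases ha with rfl | rfl | rfl | rfl <;> rcases hb with rfl | rfl | rfl | rfl <;>
        first
        | exact absurd hab (G.irrefl)
        | exact absurd hab (by assumption)
        | simp
    · intro h
      exact Subgraph.adj_sub _ h

lemma ind5 {V : Type*} {G : SimpleGraph V} {v0 v1 v2 v3 v4 : V}
    (h01 : G.Adj v0 v1) (h12 : G.Adj v1 v2) (h23 : G.Adj v2 v3) (h34 : G.Adj v3 v4)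
    (e02 : v0 ≠ v2) (e03 : v0 ≠ v3) (e04 : v0 ≠ v4) (e13 : v1 ≠ v3) (e14 : v1 ≠ v4)
    (e24 : v2 ≠ v4)
    (n02 : ¬ G.Adj v0 v2) (n03 : ¬ G.Adj v0 v3) (n04 : ¬ G.Adj v0 v4)
    (n13 : ¬ G.Adj v1 v3) (n14 : ¬ G.Adj v1 v4) (n24 : ¬ G.Adj v2 v4) :
    ∃ p : G.Walk v0 v4, IsInducedPathW G p ∧ p.support = [v0, v1, v2, v3, v4] := by
  refine ⟨Walk.cons h01 (Walk.cons h12 (Walk.cons h23 (Walk.cons h34 Walk.nil))), ⟨?_, ?_⟩, by simp⟩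
  · simp [Walk.isPath_def, h01.ne, h12.ne, h23.ne, h34.ne, e02, e03, e04, e13, e14, e24]
  · intro a b ha hb
    constructor
    · intro hab
      simp only [Walk.support_cons, Walk.support_nil, List.mem_cons, List.mem_singleton,
        List.not_mem_nil, or_false] at ha hb
      simp only [Walk.toSubgraph, Subgraph.sup_adj, subgraphOfAdj_adj, singletonSubgraph_adj,
        Pi.bot_apply, Sym2.eq, Sym2.rel_iff', Prod.mk.injEq, Prod.swap_prod_mk]
      have n20 := fun h => n02 (G.adj_symm h)
      have n30 := fun h => n03 (G.adj_symm h)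
      have n40 := fun h => n04 (G.adj_symm h)
      have n31 := fun h => n13 (G.adj_symm h)
      have n41 := fun h => n14 (G.adj_symm h)
      have n42 := fun h => n24 (G.adj_symm h)
      rcases ha with rfl | rfl | rfl | rfl | rfl <;> rcases hb with rfl | rfl | rfl | rfl | rfl <;>
        first
        | exact absurd hab (G.irrefl)
        | exact absurd hab (by assumption)
        | simp
    · intro h
      exact Subgraph.adj_sub _ h

lemma isInducedPathW_map {V W : Type*} {G : SimpleGraph V} {G' : SimpleGraph W}
    (f : G ≃g G') {u v : V} (p : G.Walk u v) (h : IsInducedPathW G p) :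
    IsInducedPathW G' (p.map f.toHom) := by
  obtain ⟨hp, hind⟩ := h
  have hinj : Function.Injective ⇑f.toHom := f.injective
  refine ⟨Walk.map_isPath_of_injective hinj hp, ?_⟩
  intro a b ha hb
  rw [Walk.support_map, List.mem_map] at ha hb
  obtain ⟨a', ha', rfl⟩ := ha
  obtain ⟨b', hb', rfl⟩ := hb
  have h1 : G'.Adj (f.toHom a') (f.toHom b') ↔ G.Adj a' b' := f.map_adj_iff
  rw [Walk.toSubgraph_map, Subgraph.map_adj, h1, hind a' b' ha' hb']
  constructor
  · intro h
    exact ⟨a', b', h, rfl, rfl⟩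
  · rintro ⟨x, y, hxy, hx, hy⟩
    rw [hinj.eq_iff] at hx hy
    subst hx; subst hy; exact hxy

lemma mem_support_map_iff {V W : Type*} {G : SimpleGraph V} {G' : SimpleGraph W}
    (f : G ≃g G') {u v : V} (p : G.Walk u v) (x : V) :
    f.toHom x ∈ (p.map f.toHom).support ↔ x ∈ p.support := by
  have hinj : Function.Injective ⇑f.toHom := f.injective
  rw [Walk.support_map, List.mem_map]
  constructor
  · rintro ⟨y, hy, hxy⟩
    rw [hinj.eq_iff] at hxy
    exact hxy ▸ hy
  · exact fun h => ⟨x, h, rfl⟩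

lemma isMpSet_map {V W : Type*} {G : SimpleGraph V} {G' : SimpleGraph W}
    (f : G ≃g G') (S : Set V) (hS : IsMpSet G S) : IsMpSet G' (f '' S) := by
  intro u v p hp
  have hq := isInducedPathW_map f.symm p hp
  have key : (f '' S) ∩ {x | x ∈ p.support} =
      f '' (S ∩ {x | x ∈ (p.map f.symm.toHom).support}) := by
    ext x
    simp only [Set.mem_inter_iff, Set.mem_image, Set.mem_setOf_eq]
    constructor
    · rintro ⟨⟨y, hy, rfl⟩, hx⟩
      refine ⟨y, ⟨hy, ?_⟩, rfl⟩
      have : f.symm.toHom (f y) ∈ (p.map f.symm.toHom).support :=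
        (mem_support_map_iff f.symm p (f y)).mpr hx
      simpa using this
    · rintro ⟨y, ⟨hy, hy2⟩, rfl⟩
      refine ⟨⟨y, hy, rfl⟩, ?_⟩
      rw [Walk.support_map, List.mem_map] at hy2
      obtain ⟨z, hz, hz2⟩ := hy2
      have : f y = z := by
        have : f (f.symm.toHom z) = f y := congrArg f hz2
        simpa using this.symm
      exact this ▸ hz
  rw [key, Set.ncard_image_of_injective _ f.injective]
  exact hS _ hq

lemma mpNum_eq_of_iso {V W : Type*} {G : SimpleGraph V} {G' : SimpleGraph W}
    (f : G ≃g G') : mpNum G = mpNum G' := by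
  unfold mpNum
  congr 1
  ext n
  constructor
  · rintro ⟨S, hS, rfl⟩
    exact ⟨f '' S, isMpSet_map f S hS, Set.ncard_image_of_injective _ f.injective⟩
  · rintro ⟨S, hS, rfl⟩
    exact ⟨f.symm '' S, isMpSet_map f.symm S hS, Set.ncard_image_of_injective _ f.symm.injective⟩

variable {r : ℕ}

lemma adj_lr {i j : Fin r} :
    (nearMatchingFreeGraph r).Adj (Sum.inl i) (Sum.inr j) ↔ (i ≠ j ∨ ((i:ℕ) = 0 ∧ (j:ℕ) = 0)) := by
  simp [nearMatchingFreeGraph, fromRel_adj]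

lemma adj_rl {i j : Fin r} :
    (nearMatchingFreeGraph r).Adj (Sum.inr i) (Sum.inl j) ↔ (j ≠ i ∨ ((j:ℕ) = 0 ∧ (i:ℕ) = 0)) := by
  rw [adj_comm]; exact adj_lr

lemma not_adj_ll {i j : Fin r} : ¬ (nearMatchingFreeGraph r).Adj (Sum.inl i) (Sum.inl j) := by
  simp [nearMatchingFreeGraph, fromRel_adj]

lemma not_adj_rr {i j : Fin r} : ¬ (nearMatchingFreeGraph r).Adj (Sum.inr i) (Sum.inr j) := by
  simp [nearMatchingFreeGraph, fromRel_adj]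

lemma exists_third (hr : 3 ≤ r) (a b : Fin r) : ∃ x : Fin r, x ≠ a ∧ x ≠ b := by
  by_contra h
  push_neg at h
  have hsub : (Finset.univ : Finset (Fin r)) ⊆ {a, b} := by
    intro x _
    simp only [Finset.mem_insert, Finset.mem_singleton]
    rcases eq_or_ne x a with h' | h'
    · exact Or.inl h'
    · exact Or.inr (h x h')
  have h1 := Finset.card_le_card hsub
  have h2 : ({a, b} : Finset (Fin r)).card ≤ 2 :=
    (Finset.card_insert_le _ _).trans (by simp)
  simp only [Finset.card_univ, Fintype.card_fin] at h1
  omega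

def sigmaIso (r : ℕ) : (nearMatchingFreeGraph r) ≃g (nearMatchingFreeGraph r) := by
  refine ⟨Equiv.sumComm _ _, ?_⟩
  intro u v
  cases u with
  | inl i => cases v with
    | inl j => simp [not_adj_ll, not_adj_rr]
    | inr j =>
      simp only [Equiv.sumComm_apply, Sum.swap_inl, Sum.swap_inr, adj_lr, adj_rl]
      exact or_congr ne_comm and_comm
  | inr i => cases v with
    | inl j =>
      simp only [Equiv.sumComm_apply, Sum.swap_inl, Sum.swap_inr, adj_lr, adj_rl]
      exact or_congr ne_comm and_comm
    | inr j => simp [not_adj_ll, not_adj_rr]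

lemma keyLLR (hr : 3 ≤ r) {a b : Fin r} (c : Fin r) (hab : a ≠ b) :
    ∃ (u v : Fin r ⊕ Fin r) (p : (nearMatchingFreeGraph r).Walk u v), IsInducedPathW _ p ∧
      Sum.inl a ∈ p.support ∧ Sum.inl b ∈ p.support ∧ Sum.inr c ∈ p.support := by
  by_cases h1 : (nearMatchingFreeGraph r).Adj (Sum.inl a) (Sum.inr c)
  · by_cases h2 : (nearMatchingFreeGraph r).Adj (Sum.inr c) (Sum.inl b)
    · obtain ⟨p, hp, hsupp⟩ := ind3 h1 h2 (by simp [hab]) not_adj_ll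
      exact ⟨_, _, p, hp, by simp [hsupp], by simp [hsupp], by simp [hsupp]⟩
    · -- c = b and b ≠ 0
      rw [adj_rl, not_or, not_not, not_and] at h2
      obtain ⟨hbc, hb0⟩ := h2
      subst hbc
      have hb : (b : ℕ) ≠ 0 := fun h => hb0 h h
      obtain ⟨x, hxa, hxb⟩ := exists_third hr a b
      have h01 : (nearMatchingFreeGraph r).Adj (Sum.inl b) (Sum.inr x) :=
        adj_lr.mpr (Or.inl (fun h => hxb h.symm))
      have h12 : (nearMatchingFreeGraph r).Adj (Sum.inr x) (Sum.inl a) :=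
        adj_rl.mpr (Or.inl (fun h => hxa h.symm))
      have n03 : ¬ (nearMatchingFreeGraph r).Adj (Sum.inl b) (Sum.inr b) := by
        simp [adj_lr, hb]
      obtain ⟨p, hp, hsupp⟩ := ind4 h01 h12 h1 (by simp [hab.symm]) (by simp)
        (by simp [hxb]) not_adj_ll n03 not_adj_rr
      exact ⟨_, _, p, hp, by simp [hsupp], by simp [hsupp], by simp [hsupp]⟩
  · -- c = a and a ≠ 0
    rw [adj_lr, not_or, not_not, not_and] at h1
    obtain ⟨hac, ha0⟩ := h1
    subst hac
    have ha : (a : ℕ) ≠ 0 := fun h => ha0 h h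
    obtain ⟨x, hxa, hxb⟩ := exists_third hr a b
    have h01 : (nearMatchingFreeGraph r).Adj (Sum.inl a) (Sum.inr x) :=
      adj_lr.mpr (Or.inl (fun h => hxa h.symm))
    have h12 : (nearMatchingFreeGraph r).Adj (Sum.inr x) (Sum.inl b) :=
      adj_rl.mpr (Or.inl (fun h => hxb h.symm))
    have h23 : (nearMatchingFreeGraph r).Adj (Sum.inl b) (Sum.inr a) :=
      adj_lr.mpr (Or.inl (fun h => hab h.symm))
    have n03 : ¬ (nearMatchingFreeGraph r).Adj (Sum.inl a) (Sum.inr a) := by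
      simp [adj_lr, ha]
    obtain ⟨p, hp, hsupp⟩ := ind4 h01 h12 h23 (by simp [hab]) (by simp)
      (by simp [hxa]) not_adj_ll n03 not_adj_rr
    exact ⟨_, _, p, hp, by simp [hsupp], by simp [hsupp], by simp [hsupp]⟩

lemma keyLLL' {a b c : Fin r} (hab : a ≠ b) (hbc : b ≠ c) (hac : a ≠ c)
    (ha : (a:ℕ) ≠ 0) (hc : (c:ℕ) ≠ 0) :
    ∃ (u v : Fin r ⊕ Fin r) (p : (nearMatchingFreeGraph r).Walk u v), IsInducedPathW _ p ∧
      Sum.inl a ∈ p.support ∧ Sum.inl b ∈ p.support ∧ Sum.inl c ∈ p.support := by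
  have h01 : (nearMatchingFreeGraph r).Adj (Sum.inl a) (Sum.inr c) := adj_lr.mpr (Or.inl hac)
  have h12 : (nearMatchingFreeGraph r).Adj (Sum.inr c) (Sum.inl b) :=
    adj_rl.mpr (Or.inl hbc)
  have h23 : (nearMatchingFreeGraph r).Adj (Sum.inl b) (Sum.inr a) :=
    adj_lr.mpr (Or.inl (fun h => hab h.symm))
  have h34 : (nearMatchingFreeGraph r).Adj (Sum.inr a) (Sum.inl c) :=
    adj_rl.mpr (Or.inl (fun h => hac h.symm))
  have n03 : ¬ (nearMatchingFreeGraph r).Adj (Sum.inl a) (Sum.inr a) := by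
    simp [adj_lr, ha]
  have n14 : ¬ (nearMatchingFreeGraph r).Adj (Sum.inr c) (Sum.inl c) := by
    simp [adj_rl, hc]
  obtain ⟨p, hp, hsupp⟩ := ind5 h01 h12 h23 h34 (by simp [hab]) (by simp)
    (by simp [hac]) (by simp [Ne.symm hac]) (by simp) (by simp [hbc])
    not_adj_ll n03 not_adj_ll not_adj_rr n14 not_adj_ll
  exact ⟨_, _, p, hp, by simp [hsupp], by simp [hsupp], by simp [hsupp]⟩

lemma keyLLL (hr : 3 ≤ r) {a b c : Fin r} (hab : a ≠ b) (hbc : b ≠ c) (hac : a ≠ c) :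
    ∃ (u v : Fin r ⊕ Fin r) (p : (nearMatchingFreeGraph r).Walk u v), IsInducedPathW _ p ∧
      Sum.inl a ∈ p.support ∧ Sum.inl b ∈ p.support ∧ Sum.inl c ∈ p.support := by
  have hval : ∀ x y : Fin r, (x:ℕ) = (y:ℕ) → x = y := fun x y h => Fin.ext h
  rcases eq_or_ne (a:ℕ) 0 with ha | ha
  · have hb : (b:ℕ) ≠ 0 := fun h => hab (hval a b (by omega))
    have hc : (c:ℕ) ≠ 0 := fun h => hac (hval a c (by omega))
    obtain ⟨u, v, p, hp, h1, h2, h3⟩ :=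
      keyLLL' (fun h : b = a => hab h.symm) hac hbc hb hc
    exact ⟨u, v, p, hp, h2, h1, h3⟩
  · rcases eq_or_ne (c:ℕ) 0 with hc | hc
    · have hb : (b:ℕ) ≠ 0 := fun h => hbc (hval b c (by omega))
      obtain ⟨u, v, p, hp, h1, h2, h3⟩ :=
        keyLLL' hac (fun h : c = b => hbc h.symm) hab ha hb
      exact ⟨u, v, p, hp, h1, h3, h2⟩
    · exact keyLLL' hab hbc hac ha hc

lemma mirror {x y z : Fin r ⊕ Fin r}
    (h : ∃ (u v : Fin r ⊕ Fin r) (p : (nearMatchingFreeGraph r).Walk u v), IsInducedPathW _ p ∧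
      x.swap ∈ p.support ∧ y.swap ∈ p.support ∧ z.swap ∈ p.support) :
    ∃ (u v : Fin r ⊕ Fin r) (p : (nearMatchingFreeGraph r).Walk u v), IsInducedPathW _ p ∧
      x ∈ p.support ∧ y ∈ p.support ∧ z ∈ p.support := by
  obtain ⟨u, v, p, hp, h1, h2, h3⟩ := h
  refine ⟨_, _, p.map (sigmaIso r).toHom, isInducedPathW_map _ p hp, ?_, ?_, ?_⟩
  · have := (mem_support_map_iff (sigmaIso r) p x.swap).mpr h1
    simpa [sigmaIso, Sum.swap_swap] using this
  · have := (mem_support_map_iff (sigmaIso r) p y.swap).mpr h2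
    simpa [sigmaIso, Sum.swap_swap] using this
  · have := (mem_support_map_iff (sigmaIso r) p z.swap).mpr h3
    simpa [sigmaIso, Sum.swap_swap] using this

lemma key (hr : 3 ≤ r) (x y z : Fin r ⊕ Fin r) (hxy : x ≠ y) (hxz : x ≠ z) (hyz : y ≠ z) :
    ∃ (u v : Fin r ⊕ Fin r) (p : (nearMatchingFreeGraph r).Walk u v), IsInducedPathW _ p ∧
      x ∈ p.support ∧ y ∈ p.support ∧ z ∈ p.support := by
  rcases x with a | a <;> rcases y with b | b <;> rcases z with c | c
  · exact keyLLL hr (by simpa using hxy) (by simpa using hyz) (by simpa using hxz)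
  · exact keyLLR hr c (by simpa using hxy)
  · obtain ⟨u, v, p, hp, h1, h2, h3⟩ := keyLLR hr b (by simpa using hxz)
    exact ⟨u, v, p, hp, h1, h3, h2⟩
  · refine mirror ?_
    simp only [Sum.swap_inl, Sum.swap_inr]
    obtain ⟨u, v, p, hp, h1, h2, h3⟩ := keyLLR hr a (by simpa using hyz)
    exact ⟨u, v, p, hp, h3, h1, h2⟩
  · obtain ⟨u, v, p, hp, h1, h2, h3⟩ := keyLLR hr a (by simpa using hyz)
    exact ⟨u, v, p, hp, h3, h1, h2⟩
  · refine mirror ?_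
    simp only [Sum.swap_inl, Sum.swap_inr]
    obtain ⟨u, v, p, hp, h1, h2, h3⟩ := keyLLR hr b (by simpa using hxz)
    exact ⟨u, v, p, hp, h1, h3, h2⟩
  · refine mirror ?_
    simp only [Sum.swap_inl, Sum.swap_inr]
    exact keyLLR hr c (by simpa using hxy)
  · refine mirror ?_
    simp only [Sum.swap_inl, Sum.swap_inr]
    exact keyLLL hr (by simpa using hxy) (by simpa using hyz) (by simpa using hxz)

lemma isMpSet_of_ncard_le {V : Type*} (G : SimpleGraph V) (S : Set V) (hfin : S.Finite)
    (h : S.ncard ≤ 2) : IsMpSet G S := fun _ _ _ _ =>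
  le_trans (Set.ncard_le_ncard Set.inter_subset_left hfin) h

lemma mp_le_two (hr : 3 ≤ r) (S : Set (Fin r ⊕ Fin r))
    (hS : IsMpSet (nearMatchingFreeGraph r) S) : S.ncard ≤ 2 := by
  by_contra h
  push_neg at h
  obtain ⟨T, hTS, hT⟩ := Set.exists_subset_card_eq (show 3 ≤ S.ncard by omega)
  obtain ⟨x, y, z, hxy, hxz, hyz, rfl⟩ := Set.ncard_eq_three.mp hT
  obtain ⟨u, v, p, hp, h1, h2, h3⟩ := key hr x y z hxy hxz hyz
  have hsub : ({x, y, z} : Set (Fin r ⊕ Fin r)) ⊆ S ∩ {w | w ∈ p.support} := by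
    intro w hw
    rcases hw with rfl | rfl | rfl
    · exact ⟨hTS (by simp), h1⟩
    · exact ⟨hTS (by simp), h2⟩
    · exact ⟨hTS (by simp), h3⟩
  have h3' := Set.ncard_le_ncard hsub (Set.toFinite _)
  rw [hT] at h3'
  have := hS p hp
  omega

lemma mpNum_eq_two (hr : 3 ≤ r) : mpNum (nearMatchingFreeGraph r) = 2 := by
  apply le_antisymm
  · apply csSup_le
    · exact ⟨0, ∅, isMpSet_of_ncard_le _ _ (Set.finite_empty) (by simp), by simp⟩
    · rintro n ⟨S, hS, rfl⟩
      exact mp_le_two hr S hS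
  · apply le_csSup
    · refine ⟨2, ?_⟩
      rintro n ⟨S, hS, rfl⟩
      exact mp_le_two hr S hS
    · refine ⟨{Sum.inl ⟨0, by omega⟩, Sum.inl ⟨1, by omega⟩}, ?_, ?_⟩
      · apply isMpSet_of_ncard_le _ _ (Set.toFinite _)
        apply le_trans (Set.ncard_insert_le _ _)
        simp
      · rw [Set.ncard_pair]
        simp [Fin.ext_iff]

lemma edge_lower (hr : 3 ≤ r) :
    r ^ 2 - r + 1 ≤ (nearMatchingFreeGraph r).edgeSet.ncard := by
  classical
  set z : Fin r := ⟨0, by omega⟩ with hz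
  set g : Fin r × Fin r → Sym2 (Fin r ⊕ Fin r) :=
    fun p => s(Sum.inl p.1, Sum.inr p.2) with hg
  have hginj : Function.Injective g := by
    rintro ⟨a, b⟩ ⟨c, d⟩ h
    simp only [hg, Sym2.eq, Sym2.rel_iff', Prod.mk.injEq, Prod.swap_prod_mk] at h
    rcases h with ⟨h1, h2⟩ | ⟨h1, h2⟩
    · simp only [Sum.inl.injEq, Sum.inr.injEq] at h1 h2
      simp [h1, h2]
    · exact absurd h1 (by simp)
  set S0 : Set (Fin r × Fin r) := {p | p.1 ≠ p.2} ∪ {(z, z)} with hS0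
  have hcard : S0.ncard = r ^ 2 - r + 1 := by
    rw [hS0, Set.ncard_union_eq ?_ (Set.toFinite _) (Set.toFinite _)]
    · have hdiag : {p : Fin r × Fin r | p.1 = p.2} = (fun i : Fin r => (i, i)) '' Set.univ := by
        ext ⟨a, b⟩
        simp only [Set.mem_setOf_eq, Set.image_univ, Set.mem_range, Prod.mk.injEq]
        constructor
        · rintro rfl; exact ⟨a, rfl, rfl⟩
        · rintro ⟨i, rfl, rfl⟩; rfl
      have hd : {p : Fin r × Fin r | p.1 = p.2}.ncard = r := by
        rw [hdiag, Set.ncard_image_of_injective _ (fun a b h => (Prod.ext_iff.mp h).1),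
          Set.ncard_univ, Nat.card_eq_fintype_card, Fintype.card_fin]
      have hcompl := Set.ncard_add_ncard_compl {p : Fin r × Fin r | p.1 = p.2}
        (Set.toFinite _) (Set.toFinite _)
      have hC : Nat.card (Fin r × Fin r) = r * r := by
        simp [Nat.card_eq_fintype_card]
      have hne : {p : Fin r × Fin r | p.1 ≠ p.2} = {p : Fin r × Fin r | p.1 = p.2}ᶜ := by
        ext p; simp
      rw [hne]
      have : ({(z, z)} : Set (Fin r × Fin r)).ncard = 1 := Set.ncard_singleton _
      rw [this]
      have hpow : r ^ 2 = r * r := sq r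
      omega
    · rw [Set.disjoint_singleton_right]
      simp
  have hsub : g '' S0 ⊆ (nearMatchingFreeGraph r).edgeSet := by
    rintro _ ⟨⟨a, b⟩, hab, rfl⟩
    rw [Set.mem_union] at hab
    rw [mem_edgeSet]
    rcases hab with hab | hab
    · exact adj_lr.mpr (Or.inl hab)
    · simp only [Set.mem_singleton_iff, Prod.mk.injEq] at hab
      refine adj_lr.mpr (Or.inr ?_)
      rw [hab.1, hab.2]
      exact ⟨rfl, rfl⟩
  calc r ^ 2 - r + 1 = (g '' S0).ncard := by
        rw [Set.ncard_image_of_injective _ hginj, hcard]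
    _ ≤ _ := Set.ncard_le_ncard hsub (Set.toFinite _)


end Aux

theorem nearMatchingFree_mpNum (r : ℕ) (hr : 3 ≤ r) :
    mpNum (nearMatchingFreeGraph r) = 2 ∧ r ^ 2 - r + 1 ≤ mexNum (2 * r) 2 := by
  refine ⟨mpNum_eq_two hr, ?_⟩
  have e : Fin (2 * r) ≃ (Fin r ⊕ Fin r) :=
    (finCongr (two_mul r)).trans finSumFinEquiv.symm
  set G2 : SimpleGraph (Fin (2 * r)) := (nearMatchingFreeGraph r).comap e.toEmbedding with hG2
  have iso : G2 ≃g nearMatchingFreeGraph r := Iso.comap e (nearMatchingFreeGraph r)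
  have hmp : mpNum G2 = 2 := (mpNum_eq_of_iso iso).trans (mpNum_eq_two hr)
  have hedge : G2.edgeSet.ncard = (nearMatchingFreeGraph r).edgeSet.ncard := by
    rw [← Nat.card_coe_set_eq, ← Nat.card_coe_set_eq]
    exact Nat.card_congr iso.mapEdgeSet
  have hmem : G2.edgeSet.ncard ∈
      {m | ∃ G : SimpleGraph (Fin (2 * r)), mpNum G = 2 ∧ G.edgeSet.ncard = m} := ⟨G2, hmp, rfl⟩
  have hbdd : BddAbove {m | ∃ G : SimpleGraph (Fin (2 * r)), mpNum G = 2 ∧ G.edgeSet.ncard = m} := by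
    refine ⟨Nat.card (Sym2 (Fin (2 * r))), ?_⟩
    rintro m ⟨H, _, rfl⟩
    rw [← Set.ncard_univ]
    exact Set.ncard_le_ncard (Set.subset_univ _) Set.finite_univ
  calc r ^ 2 - r + 1 ≤ G2.edgeSet.ncard := by rw [hedge]; exact edge_lower hr
    _ ≤ mexNum (2 * r) 2 := le_csSup hbdd hmem
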